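/- Let n ≥ 1, let q be a nondegenerate quadratic form on ℝ^{n-1}, let g(y,z) = q(y) + z² and h(y,z) = q(y) + z on ℝ^{n-1} × ℝ. Let A be a linear endomorphism of ℝ^{n-1} × ℝ whose z-component vanishes on the hyperplane {z = 0}, and suppose the function x ↦ Dg(x)[Ax] is negative for every x ≠ 0. Then for every (y,z) ≠ (0,0) with 0 ≤ z < 1/2, one has Dh(y,z)[A(y,z)] < 0. -/

import Mathlib

open QuadraticMap

section Aux
variable {E : Type*} [NormedAddCommGroup E] [NormedSpace ℝ E]

lemma quad_hasFDerivAt (Bc : E →L[ℝ] E →L[ℝ] ℝ) (x : E) :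
    HasFDerivAt (fun y => Bc y y) (Bc x + Bc.flip x) x := by
  have h := (Bc.isBoundedBilinearMap).hasFDerivAt (x, x)
  have hf : HasFDerivAt (fun y : E => (y, y))
      ((ContinuousLinearMap.id ℝ E).prod (ContinuousLinearMap.id ℝ E)) x :=
    ((ContinuousLinearMap.id ℝ E).prod (ContinuousLinearMap.id ℝ E)).hasFDerivAt
  have h2 := HasFDerivAt.comp (f := fun y : E => (y, y)) x h hf
  refine h2.congr_fderiv ?_
  ext v
  simp [IsBoundedBilinearMap.deriv]

lemma gh_fderiv (Bc : E →L[ℝ] E →L[ℝ] ℝ) (x : E × ℝ) (v : E × ℝ) :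
    fderiv ℝ (fun p : E × ℝ => Bc p.1 p.1 + p.2 ^ 2) x v
      = Bc x.1 v.1 + Bc v.1 x.1 + 2 * x.2 * v.2 ∧
    fderiv ℝ (fun p : E × ℝ => Bc p.1 p.1 + p.2) x v
      = Bc x.1 v.1 + Bc v.1 x.1 + v.2 := by
  have h1 : HasFDerivAt (fun p : E × ℝ => Bc p.1 p.1)
      ((Bc x.1 + Bc.flip x.1).comp (ContinuousLinearMap.fst ℝ E ℝ)) x :=
    (quad_hasFDerivAt Bc x.1).comp x (hasFDerivAt_fst)
  have h2 : HasFDerivAt (fun p : E × ℝ => p.2 ^ 2)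
      ((2 * x.2) • (ContinuousLinearMap.snd ℝ E ℝ)) x := by
    have hd : HasDerivAt (fun t : ℝ => t ^ 2) (2 * x.2) x.2 := by
      simpa using hasDerivAt_pow 2 x.2
    exact hd.comp_hasFDerivAt x (hasFDerivAt_snd)
  have h3 : HasFDerivAt (fun p : E × ℝ => p.2) (ContinuousLinearMap.snd ℝ E ℝ) x :=
    hasFDerivAt_snd
  constructor
  · rw [(h1.fun_add h2).fderiv]; simp [mul_comm]
  · rw [(h1.fun_add h3).fderiv]; simp

end Aux

/-- The 'easy calculation' in the proof of the Proposition of Section 2.1: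
if `g(y,z) = q(y) + z²` and `h(y,z) = q(y) + z` with `q` a nondegenerate
quadratic form on `ℝ^{n-1}`, and `A` is a linear endomorphism of `ℝ^{n-1} × ℝ`
whose `z`-component vanishes on `{z = 0}`, such that `x ↦ Dg(x)[Ax]` is negative
for all `x ≠ 0`, then `Dh(y,z)[A(y,z)] < 0` for all `(y,z) ≠ 0` with
`0 ≤ z < 1/2`. -/
theorem pseudo_gradient_easy_calculation (n : ℕ) (hn : 1 ≤ n)
    (q : QuadraticForm ℝ (Fin (n - 1) → ℝ))
    (hq : LinearMap.BilinForm.Nondegenerate q.polarBilin)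
    (A : ((Fin (n - 1) → ℝ) × ℝ) →ₗ[ℝ] ((Fin (n - 1) → ℝ) × ℝ))
    (hA : ∀ y : Fin (n - 1) → ℝ, (A (y, 0)).2 = 0)
    (hneg : ∀ x : (Fin (n - 1) → ℝ) × ℝ, x ≠ 0 →
      fderiv ℝ (fun p : (Fin (n - 1) → ℝ) × ℝ => q p.1 + p.2 ^ 2) x (A x) < 0) :
    ∀ x : (Fin (n - 1) → ℝ) × ℝ, x ≠ 0 → 0 ≤ x.2 → x.2 < 1 / 2 →
      fderiv ℝ (fun p : (Fin (n - 1) → ℝ) × ℝ => q p.1 + p.2) x (A x) < 0 := by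
  set E := (Fin (n - 1) → ℝ) with hE
  let B : E →ₗ[ℝ] E →ₗ[ℝ] ℝ := QuadraticMap.associatedHom ℝ q
  let Bc : E →L[ℝ] E →L[ℝ] ℝ := LinearMap.toContinuousLinearMap
    { toFun := fun y => LinearMap.toContinuousLinearMap (B y),
      map_add' := by intro a b; ext v; simp
      map_smul' := by intro a b; ext v; simp }
  have hBc : ∀ y v : E, Bc y v = B y v := fun y v => rfl
  have hBq : ∀ y : E, Bc y y = q y := fun y => by
    rw [hBc]; exact QuadraticMap.associated_eq_self_apply ℝ q y
  have hfung : (fun p : E × ℝ => q p.1 + p.2 ^ 2) = fun p : E × ℝ => Bc p.1 p.1 + p.2 ^ 2 := by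
    funext p; rw [hBq]
  have hfunh : (fun p : E × ℝ => q p.1 + p.2) = fun p : E × ℝ => Bc p.1 p.1 + p.2 := by
    funext p; rw [hBq]
  intro x hx h0 hlt
  set c : ℝ := (A ((0 : E), (1 : ℝ))).2 with hc_def
  -- compute (A x).2
  have hx_split : x = ((x.1, 0) : E × ℝ) + x.2 • ((0 : E), (1 : ℝ)) := by
    ext <;> simp
  have hAx2 : (A x).2 = x.2 * c := by
    conv_lhs => rw [hx_split]
    rw [map_add, _root_.map_smul]
    simp [hA x.1, hc_def]
  -- c < 0
  have hone : ((0 : E), (1 : ℝ)) ≠ (0 : E × ℝ) := by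
    intro h
    have := congrArg Prod.snd h
    simpa using this
  have hc : c < 0 := by
    have h1 := hneg ((0 : E), (1 : ℝ)) hone
    rw [hfung, (gh_fderiv Bc _ _).1] at h1
    simp only [map_zero, ContinuousLinearMap.zero_apply] at h1
    nlinarith [h1]
  -- the two derivative values
  have hDg := hneg x hx
  rw [hfung, (gh_fderiv Bc x (A x)).1, hAx2] at hDg
  rw [hfunh, (gh_fderiv Bc x (A x)).2, hAx2]
  nlinarith [mul_nonneg (mul_nonneg h0 (neg_nonneg.mpr hc.le)) (by linarith : (0:ℝ) ≤ 1 - 2 * x.2)]
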